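/- Let n ≥ 6 be even and define σ₁ = (1,2,...,n-2), σ₂ = (n-2,n-1,n), σ₄ = [∏_{i=1}^{n/2-1}(i, n-i-1)]·(n-1,n), and σ₃ = [∏_{i=1}^{n/2-2}(i, n-i-2)]·(n-2,n) (fixing n/2 - 1 and n-1). Then σ₁σ₂σ₃σ₄ = 1 in S_n. -/

import Mathlib

lemma cyc_apply_lt (L x : ℕ) (h1 : 1 ≤ x) (h2 : x < L) :
    (List.range' 1 L).formPerm x = x + 1 := by
  have hnd : (List.range' 1 L).Nodup := List.nodup_range' (s := 1) (n := L)
  have hlen : x - 1 < (List.range' 1 L).length := by simp; omega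
  have key := List.formPerm_apply_getElem (List.range' 1 L) hnd (x-1) hlen
  have hm : (x - 1 + 1) % (List.range' 1 L).length = x := by
    rw [List.length_range', Nat.sub_add_cancel h1, Nat.mod_eq_of_lt h2]
  rw [List.getElem_range', List.getElem_range', hm] at key
  have e1 : 1 + 1 * (x - 1) = x := by omega
  have e2 : 1 + 1 * x = x + 1 := by omega
  rw [e1, e2] at key
  exact key

lemma cyc_apply_last (L : ℕ) (h : 1 ≤ L) :
    (List.range' 1 L).formPerm L = 1 := by
  have hnd : (List.range' 1 L).Nodup := List.nodup_range' (s := 1) (n := L)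
  have hlen : L - 1 < (List.range' 1 L).length := by simp; omega
  have key := List.formPerm_apply_getElem (List.range' 1 L) hnd (L-1) hlen
  have hm : (L - 1 + 1) % (List.range' 1 L).length = 0 := by
    rw [List.length_range', Nat.sub_add_cancel h, Nat.mod_self]
  rw [List.getElem_range', List.getElem_range', hm] at key
  have e1 : 1 + 1 * (L - 1) = L := by omega
  rw [e1] at key
  simpa using key

lemma cyc_apply_out (L x : ℕ) (h : x = 0 ∨ L < x) :
    (List.range' 1 L).formPerm x = x := by
  apply List.formPerm_apply_of_notMem
  simp only [List.mem_range', not_and, not_lt, Nat.lt_iff_add_one_le]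
  omega

lemma prodSwap_apply (k : ℕ) : ∀ (r x : ℕ), 2*r < k →
    ((((List.range r).map (fun i => Equiv.swap (i+1) (k - (i+1)))).prod) x
    = if (1 ≤ x ∧ x ≤ r) ∨ (k - r ≤ x ∧ x ≤ k - 1) then k - x else x) := by
  intro r
  induction r with
  | zero =>
    intro x h
    simp only [List.range_zero, List.map_nil, List.prod_nil, Equiv.Perm.one_apply]
    split_ifs with hc
    · omega
    · rfl
  | succ r ih =>
    intro x h
    rw [List.range_succ, List.map_append, List.prod_append]
    simp only [List.map_cons, List.map_nil, List.prod_cons, List.prod_nil, mul_one]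
    rw [Equiv.Perm.mul_apply]
    have h' : 2*r < k := by omega
    rcases eq_or_ne x (r+1) with rfl | h1
    · rw [Equiv.swap_apply_left, ih _ h']
      split_ifs <;> omega
    · rcases eq_or_ne x (k - (r+1)) with rfl | h2
      · rw [Equiv.swap_apply_right, ih _ h']
        split_ifs <;> omega
      · rw [Equiv.swap_apply_of_ne_of_ne h1 h2, ih _ h']
        split_ifs <;> omega

set_option maxHeartbeats 2000000 in
theorem stmt_11 (n : ℕ) (hn : 6 ≤ n) (hne : Even n)
    (σ₁ σ₂ σ₃ σ₄ : Equiv.Perm ℕ)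
    (hσ₁ : σ₁ = (List.range' 1 (n - 2)).formPerm)
    (hσ₂ : σ₂ = [n - 2, n - 1, n].formPerm)
    (hσ₃ : σ₃ = ((List.range (n / 2 - 2)).map
        (fun i => Equiv.swap (i + 1) (n - (i + 1) - 2))).prod * Equiv.swap (n - 2) n)
    (hσ₄ : σ₄ = ((List.range (n / 2 - 1)).map
        (fun i => Equiv.swap (i + 1) (n - (i + 1) - 1))).prod * Equiv.swap (n - 1) n) :
    σ₁ * σ₂ * σ₃ * σ₄ = 1 := by
  obtain ⟨M, rfl⟩ : ∃ M, n = 2*M+6 := by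
    obtain ⟨k, hk⟩ := hne
    exact ⟨n/2 - 3, by omega⟩
  clear hn hne
  -- normalize σ₁
  rw [show 2*M+6 - 2 = 2*M+4 from by omega] at hσ₁
  have f1 : ∀ x, σ₁ x = if 1 ≤ x ∧ x ≤ 2*M+3 then x + 1
      else if x = 2*M+4 then 1 else x := by
    intro x
    rw [hσ₁]
    split_ifs with h1 h2
    · exact cyc_apply_lt _ _ h1.1 (by omega)
    · rw [h2]; exact cyc_apply_last _ (by omega)
    · exact cyc_apply_out _ _ (by omega)
  -- normalize σ₂
  have f2 : ∀ x, σ₂ x = if x = 2*M+4 then 2*M+5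
      else if x = 2*M+5 then 2*M+6 else if x = 2*M+6 then 2*M+4 else x := by
    intro x
    rw [hσ₂, show 2*M+6 - 2 = 2*M+4 from by omega, show 2*M+6-1 = 2*M+5 from by omega]
    rw [List.formPerm_cons_cons, List.formPerm_cons_cons, List.formPerm_singleton, mul_one]
    rw [Equiv.Perm.mul_apply, Equiv.swap_apply_def, Equiv.swap_apply_def]
    split_ifs <;> omega
  -- normalize σ₃
  rw [show (2*M+6)/2 - 2 = M+1 from by omega, show 2*M+6-2 = 2*M+4 from by omega,
    show (fun i => Equiv.swap (i + 1) (2*M+6 - (i + 1) - 2))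
      = fun i => Equiv.swap (i + 1) ((2*M+4) - (i + 1)) from by
        funext i; congr 1; omega] at hσ₃
  have f3 : ∀ x, σ₃ x = if x = 2*M+4 then 2*M+6
      else if x = 2*M+6 then 2*M+4
      else if (1 ≤ x ∧ x ≤ M+1) ∨ (M+3 ≤ x ∧ x ≤ 2*M+3) then 2*M+4 - x else x := by
    intro x
    rw [hσ₃, Equiv.Perm.mul_apply, Equiv.swap_apply_def,
      prodSwap_apply _ _ _ (by omega : 2*(M+1) < 2*M+4)]
    split_ifs <;> omega
  -- normalize σ₄
  rw [show (2*M+6)/2 - 1 = M+2 from by omega, show 2*M+6-1 = 2*M+5 from by omega,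
    show (fun i => Equiv.swap (i + 1) (2*M+6 - (i + 1) - 1))
      = fun i => Equiv.swap (i + 1) ((2*M+5) - (i + 1)) from by
        funext i; congr 1; omega] at hσ₄
  have f4 : ∀ x, σ₄ x = if x = 2*M+5 then 2*M+6
      else if x = 2*M+6 then 2*M+5
      else if 1 ≤ x ∧ x ≤ 2*M+4 then 2*M+5 - x else x := by
    intro x
    rw [hσ₄, Equiv.Perm.mul_apply, Equiv.swap_apply_def,
      prodSwap_apply _ _ _ (by omega : 2*(M+2) < 2*M+5)]
    split_ifs <;> omega
  clear hσ₁ hσ₂ hσ₃ hσ₄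
  ext x
  simp only [Equiv.Perm.mul_apply, Equiv.Perm.one_apply]
  have hx : x = 0 ∨ x = 1 ∨ (2 ≤ x ∧ x ≤ 2*M+3) ∨ x = 2*M+4 ∨ x = 2*M+5
      ∨ x = 2*M+6 ∨ 2*M+7 ≤ x := by omega
  rcases hx with h | h | h | h | h | h | h
  · have e4 : σ₄ x = x := by rw [f4]; split_ifs <;> omega
    have e3 : σ₃ x = x := by rw [f3]; split_ifs <;> omega
    have e2 : σ₂ x = x := by rw [f2]; split_ifs <;> omega
    have e1 : σ₁ x = x := by rw [f1]; split_ifs <;> omega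
    rw [e4, e3, e2, e1]
  · have e4 : σ₄ x = 2*M+4 := by rw [f4]; split_ifs <;> omega
    have e3 : σ₃ (2*M+4) = 2*M+6 := by rw [f3]; split_ifs <;> omega
    have e2 : σ₂ (2*M+6) = 2*M+4 := by rw [f2]; split_ifs <;> omega
    have e1 : σ₁ (2*M+4) = x := by rw [f1]; split_ifs <;> omega
    rw [e4, e3, e2, e1]
  · have e4 : σ₄ x = 2*M+5-x := by rw [f4]; split_ifs <;> omega
    have e3 : σ₃ (2*M+5-x) = x-1 := by rw [f3]; split_ifs <;> omega
    have e2 : σ₂ (x-1) = x-1 := by rw [f2]; split_ifs <;> omega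
    have e1 : σ₁ (x-1) = x := by rw [f1]; split_ifs <;> omega
    rw [e4, e3, e2, e1]
  · have e4 : σ₄ x = 1 := by rw [f4]; split_ifs <;> omega
    have e3 : σ₃ 1 = 2*M+3 := by rw [f3]; split_ifs <;> omega
    have e2 : σ₂ (2*M+3) = 2*M+3 := by rw [f2]; split_ifs <;> omega
    have e1 : σ₁ (2*M+3) = x := by rw [f1]; split_ifs <;> omega
    rw [e4, e3, e2, e1]
  · have e4 : σ₄ x = 2*M+6 := by rw [f4]; split_ifs <;> omega
    have e3 : σ₃ (2*M+6) = 2*M+4 := by rw [f3]; split_ifs <;> omega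
    have e2 : σ₂ (2*M+4) = 2*M+5 := by rw [f2]; split_ifs <;> omega
    have e1 : σ₁ (2*M+5) = x := by rw [f1]; split_ifs <;> omega
    rw [e4, e3, e2, e1]
  · have e4 : σ₄ x = 2*M+5 := by rw [f4]; split_ifs <;> omega
    have e3 : σ₃ (2*M+5) = 2*M+5 := by rw [f3]; split_ifs <;> omega
    have e2 : σ₂ (2*M+5) = 2*M+6 := by rw [f2]; split_ifs <;> omega
    have e1 : σ₁ (2*M+6) = x := by rw [f1]; split_ifs <;> omega
    rw [e4, e3, e2, e1]
  · have e4 : σ₄ x = x := by rw [f4]; split_ifs <;> omega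
    have e3 : σ₃ x = x := by rw [f3]; split_ifs <;> omega
    have e2 : σ₂ x = x := by rw [f2]; split_ifs <;> omega
    have e1 : σ₁ x = x := by rw [f1]; split_ifs <;> omega
    rw [e4, e3, e2, e1]
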